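/- In a hemiring R in which every h-ideal is h-idempotent, an h-ideal P ≠ R is irreducible (A ∩ B = P implies A = P or B = P, for h-ideals A, B) if and only if P is prime (AB ⊆ P implies A ⊆ P or B ⊆ P, for h-ideals A, B). -/

import Mathlib

open Pointwise

def IsLeftHIdeal {R : Type*} [NonUnitalSemiring R] (I : Set R) : Prop :=
  I.Nonempty ∧ (∀ a ∈ I, ∀ b ∈ I, a + b ∈ I) ∧
    (∀ r : R, ∀ a ∈ I, r * a ∈ I) ∧
    (∀ a ∈ I, ∀ b ∈ I, ∀ x y : R, x + a + y = b + y → x ∈ I)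

def IsRightHIdeal {R : Type*} [NonUnitalSemiring R] (I : Set R) : Prop :=
  I.Nonempty ∧ (∀ a ∈ I, ∀ b ∈ I, a + b ∈ I) ∧
    (∀ r : R, ∀ a ∈ I, a * r ∈ I) ∧
    (∀ a ∈ I, ∀ b ∈ I, ∀ x y : R, x + a + y = b + y → x ∈ I)

def IsHIdeal {R : Type*} [NonUnitalSemiring R] (I : Set R) : Prop :=
  I.Nonempty ∧ (∀ a ∈ I, ∀ b ∈ I, a + b ∈ I) ∧
    (∀ r : R, ∀ a ∈ I, r * a ∈ I) ∧ (∀ r : R, ∀ a ∈ I, a * r ∈ I) ∧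
    (∀ a ∈ I, ∀ b ∈ I, ∀ x y : R, x + a + y = b + y → x ∈ I)

def hCl {R : Type*} [NonUnitalSemiring R] (A : Set R) : Set R :=
  {x | ∃ a ∈ A, ∃ b ∈ A, ∃ y : R, x + a + y = b + y}

lemma hCl_mono {R : Type*} [NonUnitalSemiring R] {A B : Set R} (h : A ⊆ B) :
    hCl A ⊆ hCl B := by
  rintro x ⟨a, ha, b, hb, y, hy⟩
  exact ⟨a, h ha, b, h hb, y, hy⟩

lemma hCl_subset {R : Type*} [NonUnitalSemiring R] {I : Set R} (hI : IsHIdeal I) :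
    hCl I ⊆ I := by
  rintro x ⟨a, ha, b, hb, y, hy⟩
  exact hI.2.2.2.2 a ha b hb x y hy

lemma subset_hCl {R : Type*} [NonUnitalSemiring R] {S : Set R}
    (hadd : ∀ a ∈ S, ∀ b ∈ S, a + b ∈ S) : S ⊆ hCl S := by
  intro x hx
  exact ⟨x, hx, x + x, hadd x hx x hx, 0, by abel⟩

lemma add_closed_addSet {R : Type*} [NonUnitalSemiring R] {A B : Set R}
    (hA : IsHIdeal A) (hB : IsHIdeal B) :
    ∀ a ∈ A + B, ∀ b ∈ A + B, a + b ∈ A + B := by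
  rintro _ ⟨a, ha, p, hp, rfl⟩ _ ⟨a', ha', p', hp', rfl⟩
  exact ⟨a + a', hA.2.1 a ha a' ha', p + p', hB.2.1 p hp p' hp', add_add_add_comm a a' p p'⟩

/-- The h-closure of the sum of two h-ideals is an h-ideal. -/
lemma join_isHIdeal {R : Type*} [NonUnitalSemiring R] {A B : Set R}
    (hA : IsHIdeal A) (hB : IsHIdeal B) : IsHIdeal (hCl (A + B)) := by
  have hadd := add_closed_addSet hA hB
  obtain ⟨a0, ha0⟩ := hA.1
  obtain ⟨b0, hb0⟩ := hB.1
  have hne : (A + B).Nonempty := ⟨a0 + b0, a0, ha0, b0, hb0, rfl⟩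
  refine ⟨hne.mono (subset_hCl hadd), ?_, ?_, ?_, ?_⟩
  · rintro x ⟨s1, hs1, s2, hs2, y, hy⟩ x' ⟨t1, ht1, t2, ht2, z, hz⟩
    refine ⟨s1 + t1, hadd _ hs1 _ ht1, s2 + t2, hadd _ hs2 _ ht2, y + z, ?_⟩
    calc x + x' + (s1 + t1) + (y + z) = (x + s1 + y) + (x' + t1 + z) := by abel
      _ = (s2 + y) + (t2 + z) := by rw [hy, hz]
      _ = s2 + t2 + (y + z) := by abel
  · rintro r x ⟨s1, hs1, s2, hs2, y, hy⟩
    have hrs : ∀ s ∈ A + B, r * s ∈ A + B := by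
      rintro _ ⟨a, ha, p, hp, rfl⟩
      exact ⟨r * a, hA.2.2.1 r a ha, r * p, hB.2.2.1 r p hp, (mul_add r a p).symm⟩
    refine ⟨r * s1, hrs _ hs1, r * s2, hrs _ hs2, r * y, ?_⟩
    calc r * x + r * s1 + r * y = r * (x + s1 + y) := by rw [mul_add, mul_add]
      _ = r * (s2 + y) := by rw [hy]
      _ = r * s2 + r * y := by rw [mul_add]
  · rintro r x ⟨s1, hs1, s2, hs2, y, hy⟩
    have hrs : ∀ s ∈ A + B, s * r ∈ A + B := by
      rintro _ ⟨a, ha, p, hp, rfl⟩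
      exact ⟨a * r, hA.2.2.2.1 r a ha, p * r, hB.2.2.2.1 r p hp, (add_mul a p r).symm⟩
    refine ⟨s1 * r, hrs _ hs1, s2 * r, hrs _ hs2, y * r, ?_⟩
    calc x * r + s1 * r + y * r = (x + s1 + y) * r := by rw [add_mul, add_mul]
      _ = (s2 + y) * r := by rw [hy]
      _ = s2 * r + y * r := by rw [add_mul]
  · rintro u ⟨s1, hs1, s2, hs2, y1, h2⟩ v ⟨t1, ht1, t2, ht2, y2, h3⟩ x y h1
    refine ⟨s2 + t1, hadd _ hs2 _ ht1, t2 + s1, hadd _ ht2 _ hs1, y1 + y + y2, ?_⟩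
    calc x + (s2 + t1) + (y1 + y + y2) = x + (u + s1 + y1) + (t1 + y + y2) := by
          rw [h2]; abel
      _ = (x + u + y) + (s1 + y1 + t1 + y2) := by abel
      _ = (v + y) + (s1 + y1 + t1 + y2) := by rw [h1]
      _ = (v + t1 + y2) + (s1 + y1 + y) := by abel
      _ = (t2 + y2) + (s1 + y1 + y) := by rw [h3]
      _ = (t2 + s1) + (y1 + y + y2) := by abel

lemma inter_isHIdeal {R : Type*} [NonUnitalSemiring R] {A B : Set R}
    (hA : IsHIdeal A) (hB : IsHIdeal B) (hne : (A ∩ B).Nonempty) :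
    IsHIdeal (A ∩ B) :=
  ⟨hne,
   fun a ha b hb => ⟨hA.2.1 a ha.1 b hb.1, hB.2.1 a ha.2 b hb.2⟩,
   fun r a ha => ⟨hA.2.2.1 r a ha.1, hB.2.2.1 r a ha.2⟩,
   fun r a ha => ⟨hA.2.2.2.1 r a ha.1, hB.2.2.2.1 r a ha.2⟩,
   fun a ha b hb x y h =>
     ⟨hA.2.2.2.2 a ha.1 b hb.1 x y h, hB.2.2.2.2 a ha.2 b hb.2 x y h⟩⟩

theorem stmt_17 {R : Type*} [NonUnitalSemiring R]
    (hidem : ∀ A : Set R, IsHIdeal A → hCl (A * A) = A)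
    (P : Set R) (hP : IsHIdeal P) (hne : P ≠ Set.univ) :
    (∀ A B : Set R, IsHIdeal A → IsHIdeal B → A ∩ B = P → A = P ∨ B = P) ↔
      (∀ A B : Set R, IsHIdeal A → IsHIdeal B → A * B ⊆ P → A ⊆ P ∨ B ⊆ P) := by
  constructor
  · intro hirr A B hA hB hAB
    -- define A' = hCl (A + P), B' = hCl (B + P)
    set A' := hCl (A + P) with hA'def
    set B' := hCl (B + P) with hB'def
    have hA' : IsHIdeal A' := join_isHIdeal hA hP
    have hB' : IsHIdeal B' := join_isHIdeal hB hP
    obtain ⟨a0, ha0⟩ := hA.1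
    obtain ⟨b0, hb0⟩ := hB.1
    obtain ⟨p0, hp0⟩ := hP.1
    have hPA' : P ⊆ A' := fun p hp =>
      ⟨a0 + p, ⟨a0, ha0, p, hp, rfl⟩, a0 + (p + p),
        ⟨a0, ha0, p + p, hP.2.1 p hp p hp, rfl⟩, 0, by abel⟩
    have hPB' : P ⊆ B' := fun p hp =>
      ⟨b0 + p, ⟨b0, hb0, p, hp, rfl⟩, b0 + (p + p),
        ⟨b0, hb0, p + p, hP.2.1 p hp p hp, rfl⟩, 0, by abel⟩
    have hAA' : A ⊆ A' := fun a ha =>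
      ⟨a0 + p0, ⟨a0, ha0, p0, hp0, rfl⟩, (a + a0) + p0,
        ⟨a + a0, hA.2.1 a ha a0 ha0, p0, hp0, rfl⟩, 0, by abel⟩
    have hBB' : B ⊆ B' := fun b hb =>
      ⟨b0 + p0, ⟨b0, hb0, p0, hp0, rfl⟩, (b + b0) + p0,
        ⟨b + b0, hB.2.1 b hb b0 hb0, p0, hp0, rfl⟩, 0, by abel⟩
    -- products of the generating sets land in P
    have key0 : ∀ s ∈ A + P, ∀ t ∈ B + P, s * t ∈ P := by
      rintro _ ⟨a, ha, p, hp, rfl⟩ _ ⟨b, hb, q, hq, rfl⟩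
      have h1 : a * b ∈ P := hAB (Set.mul_mem_mul ha hb)
      have h2 : a * q ∈ P := hP.2.2.1 a q hq
      have h3 : p * b ∈ P := hP.2.2.2.1 b p hp
      have h4 : p * q ∈ P := hP.2.2.2.1 q p hp
      have : (a + p) * (b + q) = a * b + a * q + (p * b + p * q) := by
        rw [add_mul, mul_add, mul_add]
      rw [this]
      exact hP.2.1 _ (hP.2.1 _ h1 _ h2) _ (hP.2.1 _ h3 _ h4)
    have key1 : ∀ s ∈ A + P, ∀ z ∈ B', s * z ∈ P := by
      rintro s hs z ⟨t1, ht1, t2, ht2, w, hw⟩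
      refine hP.2.2.2.2 (s * t1) (key0 s hs t1 ht1) (s * t2) (key0 s hs t2 ht2)
        (s * z) (s * w) ?_
      calc s * z + s * t1 + s * w = s * (z + t1 + w) := by rw [mul_add, mul_add]
        _ = s * (t2 + w) := by rw [hw]
        _ = s * t2 + s * w := by rw [mul_add]
    have key : ∀ x ∈ A', ∀ z ∈ B', x * z ∈ P := by
      rintro x ⟨s1, hs1, s2, hs2, y, hy⟩ z hz
      refine hP.2.2.2.2 (s1 * z) (key1 s1 hs1 z hz) (s2 * z) (key1 s2 hs2 z hz)
        (x * z) (y * z) ?_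
      calc x * z + s1 * z + y * z = (x + s1 + y) * z := by rw [add_mul, add_mul]
        _ = (s2 + y) * z := by rw [hy]
        _ = s2 * z + y * z := by rw [add_mul]
    -- A' ∩ B' = P
    have hC : IsHIdeal (A' ∩ B') :=
      inter_isHIdeal hA' hB' ⟨p0, hPA' hp0, hPB' hp0⟩
    have hCC : (A' ∩ B') * (A' ∩ B') ⊆ P := by
      rintro _ ⟨c, hc, c', hc', rfl⟩
      exact key c hc.1 c' hc'.2
    have hCP : A' ∩ B' ⊆ P := by
      intro x hx
      have : x ∈ hCl ((A' ∩ B') * (A' ∩ B')) := (hidem _ hC).symm ▸ hx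
      exact hCl_subset hP (hCl_mono hCC this)
    have hCeq : A' ∩ B' = P :=
      le_antisymm hCP (Set.subset_inter hPA' hPB')
    rcases hirr A' B' hA' hB' hCeq with h | h
    · exact Or.inl (h ▸ hAA')
    · exact Or.inr (h ▸ hBB')
  · intro hpr A B hA hB hAB
    have hsub : A * B ⊆ P := by
      rintro _ ⟨a, ha, b, hb, rfl⟩
      rw [← hAB]
      exact ⟨hA.2.2.2.1 b a ha, hB.2.2.1 a b hb⟩
    rcases hpr A B hA hB hsub with h | h
    · left; exact le_antisymm h (hAB ▸ Set.inter_subset_left)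
    · right; exact le_antisymm h (hAB ▸ Set.inter_subset_right)
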